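/- arXiv:2201.07446 — 2 statements merged into one kernel-verified Lean document; each statement's English description precedes it below -/
import Mathlib

section
/- Let (i_n) ∈ {-1,0,1}^ℕ satisfy 01(-1)^∞ ≼ (i_n) ≺ 01(-1)0^∞ (so that i_1 i_2 i_3 = 01(-1) and (i_4, i_5, …) ≺ 0^∞). Then the function f(λ) = (1-λ)·∑_{n≥1} i_n·λ^{n-1} is strictly concave on (0, 1/3], strictly increasing on (0, 1/4], and there exists a unique λ* ∈ [1/4, 1/3) such that f is strictly increasing on (0, λ*] and strictly decreasing on [λ*, 1/3]. -/
open scoped Pointwise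

/-- `PiFun i λ = (1-λ) ∑_{n≥0} i_n λ^n`, the series Π from the paper (0-based indexing). -/
noncomputable def PiFun (i : ℕ → ℝ) (l : ℝ) : ℝ := (1 - l) * ∑' n : ℕ, i n * l ^ n

/-- `i` is a sequence over the alphabet `{-1,0,1}`. -/
def IsCoding (i : ℕ → ℝ) : Prop := ∀ n, i n = -1 ∨ i n = 0 ∨ i n = 1

/-- Strict lexicographic order on sequences. -/
def LexLt (i j : ℕ → ℝ) : Prop := ∃ m, (∀ n, n < m → i n = j n) ∧ i m < j m

/-- Non-strict lexicographic order on sequences. -/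
def LexLe (i j : ℕ → ℝ) : Prop := LexLt i j ∨ i = j

-- `rho i j = 3^{-k}` where `k` is the first (0-based) index at which the sequences differ
-- (this equals `3^{1-k}` for 1-based indexing as in the paper).
open Classical in
noncomputable def rho (i j : ℕ → ℝ) : ℝ :=
  if i = j then 0 else (3 : ℝ) ^ (-((sInf {n : ℕ | i n ≠ j n} : ℕ) : ℤ))

/-- The middle-`(1-2λ)` Cantor set `C_λ`. -/
def Cset (l : ℝ) : Set ℝ :=
  {x | ∃ i : ℕ → ℝ, (∀ n, i n = 0 ∨ i n = 1) ∧ x = (1 - l) * ∑' n : ℕ, i n * l ^ n}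

/-- `Λ(t) = {λ ∈ (0,1/3] : t ∈ C_λ - C_λ}`. -/
def Lam (t : ℝ) : Set ℝ := {l | l ∈ Set.Ioc (0 : ℝ) (1/3) ∧ t ∈ Cset l - Cset l}


section AuxStmt6
open Set Filter Finset Topology


noncomputable def F1 (i : ℕ → ℝ) (l : ℝ) : ℝ :=
  ∑' n : ℕ, i n * ((n : ℝ) * l ^ (n - 1) - ((n : ℝ) + 1) * l ^ n)

noncomputable def F2 (i : ℕ → ℝ) (l : ℝ) : ℝ :=
  ∑' n : ℕ, i n * ((n : ℝ) * ((n : ℝ) - 1) * l ^ (n - 2) - ((n : ℝ) + 1) * (n : ℝ) * l ^ (n - 1))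

lemma tsum_telescope_aux {b : ℕ → ℝ} (hb : Tendsto b atTop (nhds 0))
    (hs : Summable fun n => b n - b (n + 1)) : ∑' n, (b n - b (n + 1)) = b 0 := by
  have h1 := hs.hasSum.tendsto_sum_nat
  have h2 : Tendsto (fun N => ∑ n ∈ Finset.range N, (b n - b (n + 1))) atTop (nhds (b 0)) := by
    simp only [Finset.sum_range_sub']
    simpa using (tendsto_const_nhds (x := b 0)).sub hb
  exact tendsto_nhds_unique h1 h2

lemma summable_cube : Summable (fun n : ℕ => ((n : ℝ) + 2) ^ 3 * (1/2) ^ n) := by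
  have h : ‖(1/2 : ℝ)‖ < 1 := by rw [Real.norm_eq_abs, abs_of_pos] <;> norm_num
  have h3 := summable_pow_mul_geometric_of_norm_lt_one (R := ℝ) 3 h
  have h2 := summable_pow_mul_geometric_of_norm_lt_one (R := ℝ) 2 h
  have h1 := summable_pow_mul_geometric_of_norm_lt_one (R := ℝ) 1 h
  have h0 := summable_geometric_of_norm_lt_one h
  have := (h3.add ((h2.mul_left 6).add ((h1.mul_left 12).add (h0.mul_left 8))))
  convert this using 2 with n
  · rfl
  ring

lemma summable_of_cube_bound {f : ℕ → ℝ} {C : ℝ}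
    (h : ∀ n, |f n| ≤ C * (((n : ℝ) + 2) ^ 3 * (1/2) ^ n)) : Summable f := by
  refine Summable.of_norm_bounded (summable_cube.mul_left C) ?_
  simpa [Real.norm_eq_abs] using h

lemma half_pred (n : ℕ) : ((1 : ℝ)/2) ^ (n - 1) ≤ 2 * (1/2) ^ n := by
  cases n with
  | zero => norm_num
  | succ k => rw [Nat.add_sub_cancel, pow_succ]; nlinarith [pow_pos (by norm_num : (0:ℝ) < 1/2) k]

lemma half_pred2 (n : ℕ) : ((1 : ℝ)/2) ^ (n - 2) ≤ 4 * (1/2) ^ n := by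
  match n with
  | 0 => norm_num
  | 1 => norm_num
  | (k+2) =>
    rw [Nat.add_sub_cancel, pow_succ, pow_succ]
    nlinarith [pow_pos (by norm_num : (0:ℝ) < 1/2) k]

lemma abs_pow_le {y : ℝ} (hy : |y| ≤ 1/2) (k : ℕ) : |y| ^ k ≤ (1/2) ^ k :=
  pow_le_pow_left₀ (abs_nonneg y) hy k

lemma bound1 {i : ℕ → ℝ} (hbd : ∀ n, |i n| ≤ 1) {y : ℝ} (hy : |y| ≤ 1/2) (n : ℕ) :
    |i n * ((n : ℝ) * y ^ (n - 1) - ((n : ℝ) + 1) * y ^ n)| ≤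
      3 * (((n : ℝ) + 2) ^ 3 * (1/2) ^ n) := by
  have hp : (0:ℝ) ≤ (1/2) ^ n := by positivity
  have hn : (0:ℝ) ≤ (n : ℝ) := Nat.cast_nonneg n
  have e1 : |y ^ (n-1)| ≤ 2 * (1/2)^n := by
    rw [abs_pow]; exact le_trans (abs_pow_le hy (n-1)) (half_pred n)
  have e2 : |y ^ n| ≤ (1/2)^n := by rw [abs_pow]; exact abs_pow_le hy n
  calc |i n * ((n : ℝ) * y ^ (n - 1) - ((n : ℝ) + 1) * y ^ n)|
      ≤ 1 * |(n : ℝ) * y ^ (n - 1) - ((n : ℝ) + 1) * y ^ n| := by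
        rw [abs_mul]; exact mul_le_mul_of_nonneg_right (hbd n) (abs_nonneg _)
    _ ≤ |(n : ℝ) * y ^ (n - 1)| + |((n : ℝ) + 1) * y ^ n| := by
        rw [one_mul]; exact abs_sub _ _
    _ ≤ (n : ℝ) * (2 * (1/2)^n) + ((n : ℝ) + 1) * (1/2)^n := by
        rw [abs_mul, abs_mul, Nat.abs_cast, abs_of_nonneg (by linarith : (0:ℝ) ≤ (n:ℝ)+1)]
        exact add_le_add (mul_le_mul_of_nonneg_left e1 hn)
          (mul_le_mul_of_nonneg_left e2 (by linarith))
    _ ≤ 3 * (((n : ℝ) + 2) ^ 3 * (1/2) ^ n) := by nlinarith [mul_nonneg (mul_nonneg hn hn) hn, mul_nonneg hn hn, mul_nonneg hp hn, mul_nonneg hp (mul_nonneg hn hn), mul_nonneg hp (mul_nonneg (mul_nonneg hn hn) hn)]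

lemma bound2 {i : ℕ → ℝ} (hbd : ∀ n, |i n| ≤ 1) {y : ℝ} (hy : |y| ≤ 1/2) (n : ℕ) :
    |i n * ((n : ℝ) * ((n : ℝ) - 1) * y ^ (n - 2) - ((n : ℝ) + 1) * (n : ℝ) * y ^ (n - 1))| ≤
      6 * (((n : ℝ) + 2) ^ 3 * (1/2) ^ n) := by
  have hp : (0:ℝ) ≤ (1/2) ^ n := by positivity
  have hn : (0:ℝ) ≤ (n : ℝ) := Nat.cast_nonneg n
  have e1 : |y ^ (n-2)| ≤ 4 * (1/2)^n := by
    rw [abs_pow]; exact le_trans (abs_pow_le hy (n-2)) (half_pred2 n)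
  have e2 : |y ^ (n-1)| ≤ 2 * (1/2)^n := by
    rw [abs_pow]; exact le_trans (abs_pow_le hy (n-1)) (half_pred n)
  have hnm : |(n : ℝ) * ((n : ℝ) - 1)| ≤ (n : ℝ) * ((n : ℝ) + 1) := by
    rw [abs_mul, abs_of_nonneg hn]
    refine mul_le_mul_of_nonneg_left ?_ hn
    rw [abs_le]; constructor <;> linarith
  calc |i n * ((n : ℝ) * ((n : ℝ) - 1) * y ^ (n - 2) - ((n : ℝ) + 1) * (n : ℝ) * y ^ (n - 1))|
      ≤ 1 * |(n : ℝ) * ((n : ℝ) - 1) * y ^ (n - 2) - ((n : ℝ) + 1) * (n : ℝ) * y ^ (n - 1)| := by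
        rw [abs_mul]; exact mul_le_mul_of_nonneg_right (hbd n) (abs_nonneg _)
    _ ≤ |(n : ℝ) * ((n : ℝ) - 1)| * |y ^ (n - 2)| + |((n : ℝ) + 1) * (n : ℝ)| * |y ^ (n - 1)| := by
        rw [one_mul, ← abs_mul, ← abs_mul]; exact abs_sub _ _
    _ ≤ ((n : ℝ) * ((n : ℝ) + 1)) * (4 * (1/2)^n) + (((n : ℝ) + 1) * (n : ℝ)) * (2 * (1/2)^n) := by
        refine add_le_add (mul_le_mul hnm e1 (abs_nonneg _) (by positivity))
          (mul_le_mul (le_of_eq ?_) e2 (abs_nonneg _) (by positivity))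
        rw [abs_mul, abs_of_nonneg hn, abs_of_nonneg (by linarith : (0:ℝ) ≤ (n:ℝ)+1)]
    _ ≤ 6 * (((n : ℝ) + 2) ^ 3 * (1/2) ^ n) := by nlinarith [mul_nonneg (mul_nonneg hn hn) hn, mul_nonneg hn hn, mul_nonneg hp hn, mul_nonneg hp (mul_nonneg hn hn), mul_nonneg hp (mul_nonneg (mul_nonneg hn hn) hn)]


lemma tsum_split_aux (i : ℕ → ℝ) (m : ℕ) (hbd : ∀ n, |i n| ≤ 1) (h0 : i 0 = 0)
    (hm : ∀ j, j < m → i (j + 3) = 0) (w : ℕ → ℝ) (hw : Summable fun n => i n * w n)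
    (hwpos : ∀ n, 0 ≤ w (n + (m + 4))) (hWs : Summable fun n => w (n + (m + 4))) :
    |∑' n, i n * w n - (i 1 * w 1 + i 2 * w 2 + i (m + 3) * w (m + 3))| ≤
      ∑' n, w (n + (m + 4)) := by
  have hsplit := Summable.sum_add_tsum_nat_add (f := fun n => i n * w n) (m + 4) hw
  have hfin : ∑ n ∈ Finset.range (m + 4), i n * w n
      = i 1 * w 1 + i 2 * w 2 + i (m + 3) * w (m + 3) := by
    have hsub : ({1, 2, m + 3} : Finset ℕ) ⊆ Finset.range (m + 4) := by
      intro x hx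
      simp only [Finset.mem_insert, Finset.mem_singleton] at hx
      rcases hx with rfl | rfl | rfl <;> simp [Finset.mem_range] <;> omega
    rw [← Finset.sum_subset hsub]
    · have h12 : (1 : ℕ) ≠ 2 := by norm_num
      have h1m : (1 : ℕ) ≠ m + 3 := by omega
      have h2m : (2 : ℕ) ≠ m + 3 := by omega
      rw [show ({1, 2, m + 3} : Finset ℕ) = insert 1 (insert 2 {m + 3}) from rfl]
      rw [Finset.sum_insert (by simp [h12, h1m]), Finset.sum_insert (by simp [h2m]),
        Finset.sum_singleton]
      ring
    · intro x hx hnx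
      simp only [Finset.mem_insert, Finset.mem_singleton, not_or] at hnx
      simp only [Finset.mem_range] at hx
      obtain ⟨hx1, hx2, hx3⟩ := hnx
      rcases Nat.eq_or_lt_of_le (Nat.zero_le x) with h | h
      · subst h; simp [h0]
      · -- x ≥ 1, x ≠ 1, 2, m+3, x < m+4 ⇒ 3 ≤ x ≤ m+2
        have hx4 : 3 ≤ x := by omega
        have := hm (x - 3) (by omega)
        rw [show x - 3 + 3 = x from by omega] at this
        simp [this]
  have htail : |∑' n, i (n + (m + 4)) * w (n + (m + 4))| ≤ ∑' n, w (n + (m + 4)) := by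
    have habs : Summable fun n => |i (n + (m + 4)) * w (n + (m + 4))| := by
      refine Summable.of_nonneg_of_le (fun n => abs_nonneg _) (fun n => ?_) hWs
      rw [abs_mul]
      calc |i (n + (m + 4))| * |w (n + (m + 4))| ≤ 1 * |w (n + (m + 4))| :=
            mul_le_mul_of_nonneg_right (hbd _) (abs_nonneg _)
        _ = w (n + (m + 4)) := by rw [one_mul, abs_of_nonneg (hwpos n)]
      
    calc |∑' n, i (n + (m + 4)) * w (n + (m + 4))|
        ≤ ∑' n, |i (n + (m + 4)) * w (n + (m + 4))| := by
          have := norm_tsum_le_tsum_norm (f := fun n => i (n + (m + 4)) * w (n + (m + 4)))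
              (by simpa only [Real.norm_eq_abs] using habs)
          simpa only [Real.norm_eq_abs] using this
      _ ≤ ∑' n, w (n + (m + 4)) := by
          refine Summable.tsum_le_tsum (fun n => ?_) habs hWs
          rw [abs_mul]
          calc |i (n + (m + 4))| * |w (n + (m + 4))| ≤ 1 * |w (n + (m + 4))| :=
                mul_le_mul_of_nonneg_right (hbd _) (abs_nonneg _)
            _ = w (n + (m + 4)) := by rw [one_mul, abs_of_nonneg (hwpos n)]
  have : ∑' n, i n * w n - (i 1 * w 1 + i 2 * w 2 + i (m + 3) * w (m + 3))
      = ∑' n, i (n + (m + 4)) * w (n + (m + 4)) := by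
    rw [← hsplit, hfin]; ring
  rw [this]; exact htail

section deriv
variable {i : ℕ → ℝ}

lemma PiFun_eq (i : ℕ → ℝ) : PiFun i = fun l => ∑' n : ℕ, i n * (l ^ n - l ^ (n + 1)) := by
  funext l
  rw [PiFun, ← tsum_mul_left]
  exact tsum_congr fun n => by ring

lemma hasDerivAt_PiFun (hbd : ∀ n, |i n| ≤ 1) {x : ℝ}
    (hx : x ∈ Ioo (-(1/2) : ℝ) (1/2)) : HasDerivAt (PiFun i) (F1 i x) x := by
  rw [PiFun_eq, show F1 i x = ∑' n : ℕ, i n * ((n : ℝ) * x ^ (n - 1) - ((n : ℝ) + 1) * x ^ n)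
    from rfl]
  refine hasDerivAt_tsum_of_isPreconnected (F := ℝ)
    (u := fun n : ℕ => 3 * (((n : ℝ) + 2) ^ 3 * (1/2) ^ n))
    (g := fun n l => i n * (l ^ n - l ^ (n + 1)))
    (g' := fun n y => i n * ((n : ℝ) * y ^ (n - 1) - ((n : ℝ) + 1) * y ^ n))
    (summable_cube.mul_left 3) isOpen_Ioo (convex_Ioo _ _).isPreconnected
    (fun n y _ => ?_) (fun n y hy => ?_) (by norm_num : (0:ℝ) ∈ Ioo (-(1/2):ℝ) (1/2)) ?_ hx
  · have h := ((hasDerivAt_pow n y).sub (hasDerivAt_pow (n + 1) y)).const_mul (i n)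
    convert h using 1
    · rfl
    · rfl
    push_cast [Nat.add_sub_cancel]
    ring
  · have hy2 : |y| ≤ 1/2 := by
      rw [abs_le]; exact ⟨by linarith [hy.1], le_of_lt hy.2⟩
    simpa only [Real.norm_eq_abs] using bound1 hbd hy2 n
  · refine summable_of_ne_finset_zero (s := {0}) fun b hb => ?_
    simp only [Finset.mem_singleton] at hb
    beta_reduce
    rw [zero_pow hb, zero_pow (by omega : b + 1 ≠ 0)]
    ring

lemma hasDerivAt_F1 (hbd : ∀ n, |i n| ≤ 1) {x : ℝ}
    (hx : x ∈ Ioo (-(1/2) : ℝ) (1/2)) : HasDerivAt (F1 i) (F2 i x) x := by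
  rw [show F1 i = fun l => ∑' n : ℕ, i n * ((n : ℝ) * l ^ (n - 1) - ((n : ℝ) + 1) * l ^ n)
    from rfl, show F2 i x = ∑' n : ℕ,
      i n * ((n : ℝ) * ((n : ℝ) - 1) * x ^ (n - 2) - ((n : ℝ) + 1) * (n : ℝ) * x ^ (n - 1))
    from rfl]
  refine hasDerivAt_tsum_of_isPreconnected (F := ℝ)
    (u := fun n : ℕ => 6 * (((n : ℝ) + 2) ^ 3 * (1/2) ^ n))
    (g := fun n l => i n * ((n : ℝ) * l ^ (n - 1) - ((n : ℝ) + 1) * l ^ n))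
    (g' := fun n y => i n * ((n : ℝ) * ((n : ℝ) - 1) * y ^ (n - 2) - ((n : ℝ) + 1) * (n : ℝ) * y ^ (n - 1)))
    (summable_cube.mul_left 6) isOpen_Ioo (convex_Ioo _ _).isPreconnected
    (fun n y _ => ?_) (fun n y hy => ?_) (by norm_num : (0:ℝ) ∈ Ioo (-(1/2):ℝ) (1/2)) ?_ hx
  · have h := (((hasDerivAt_pow (n - 1) y).const_mul ((n : ℝ))).sub
      ((hasDerivAt_pow n y).const_mul ((n : ℝ) + 1))).const_mul (i n)
    convert h using 1
    · rfl
    · rfl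
    rcases n with _ | k
    · norm_num
    · show i (k+1) * ((↑(k+1) : ℝ) * ((↑(k+1):ℝ) - 1) * y ^ (k + 1 - 2) - ((↑(k+1):ℝ) + 1) * (↑(k+1):ℝ) * y ^ (k + 1 - 1)) = _
      have e2 : k + 1 - 2 = k - 1 := rfl
      have e1 : k + 1 - 1 = k := rfl
      rw [e1, e2]
      push_cast
      ring
  · have hy2 : |y| ≤ 1/2 := by
      rw [abs_le]; exact ⟨by linarith [hy.1], le_of_lt hy.2⟩
    simpa only [Real.norm_eq_abs] using bound2 hbd hy2 n
  · refine summable_of_ne_finset_zero (s := {0, 1}) fun b hb => ?_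
    simp only [Finset.mem_insert, Finset.mem_singleton, not_or] at hb
    beta_reduce
    rw [zero_pow (by omega : b - 1 ≠ 0), zero_pow hb.1]
    ring

end deriv

section tel

lemma cast_bound1 (m n : ℕ) : ((n : ℝ) + (m : ℝ) + 4) ≤ ((m : ℝ) + 4) * ((n : ℝ) + 2) ^ 3 := by
  have hn : (0:ℝ) ≤ (n : ℝ) := Nat.cast_nonneg n
  have hm : (0:ℝ) ≤ (m : ℝ) := Nat.cast_nonneg m
  nlinarith [mul_nonneg hn hm, mul_nonneg hn hn, mul_nonneg (mul_nonneg hn hn) hn]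

lemma summable_b1 (m : ℕ) {l : ℝ} (h0 : 0 ≤ l) (hl : l ≤ 1/2) :
    Summable (fun n : ℕ => ((n + m + 4 : ℕ) : ℝ) * l ^ (n + m + 3)) := by
  refine summable_of_cube_bound (C := (m : ℝ) + 4) fun n => ?_
  have hpow : l ^ (n + m + 3) ≤ (1/2) ^ n := by
    calc l ^ (n + m + 3) ≤ l ^ n := pow_le_pow_of_le_one h0 (by linarith) (by omega)
      _ ≤ (1/2) ^ n := pow_le_pow_left₀ h0 hl n
  have habs : |((n + m + 4 : ℕ) : ℝ) * l ^ (n + m + 3)|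
      = ((n + m + 4 : ℕ) : ℝ) * l ^ (n + m + 3) := by
    rw [abs_of_nonneg]; positivity
  rw [habs, mul_comm ((m:ℝ)+4)]
  calc ((n + m + 4 : ℕ) : ℝ) * l ^ (n + m + 3) ≤ ((n + m + 4 : ℕ) : ℝ) * (1/2)^n := by
        exact mul_le_mul_of_nonneg_left hpow (by positivity)
    _ ≤ (((m : ℝ) + 4) * ((n : ℝ) + 2) ^ 3) * (1/2)^n := by
        refine mul_le_mul_of_nonneg_right ?_ (by positivity)
        push_cast
        exact cast_bound1 m n
    _ = ((n : ℝ) + 2) ^ 3 * (1/2)^n * ((m : ℝ) + 4) := by ring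

lemma summable_b2 (m : ℕ) {l : ℝ} (h0 : 0 ≤ l) (hl : l ≤ 1/2) :
    Summable (fun n : ℕ => ((n + m + 4 : ℕ) : ℝ) * ((n + m + 3 : ℕ) : ℝ) * l ^ (n + m + 2)) := by
  refine summable_of_cube_bound (C := ((m : ℝ) + 4) * ((m : ℝ) + 3)) fun n => ?_
  have hpow : l ^ (n + m + 2) ≤ (1/2) ^ n := by
    calc l ^ (n + m + 2) ≤ l ^ n := pow_le_pow_of_le_one h0 (by linarith) (by omega)
      _ ≤ (1/2) ^ n := pow_le_pow_left₀ h0 hl n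
  have habs : |((n + m + 4 : ℕ) : ℝ) * ((n + m + 3 : ℕ) : ℝ) * l ^ (n + m + 2)|
      = ((n + m + 4 : ℕ) : ℝ) * ((n + m + 3 : ℕ) : ℝ) * l ^ (n + m + 2) := by
    rw [abs_of_nonneg]; positivity
  have hn : (0:ℝ) ≤ (n : ℝ) := Nat.cast_nonneg n
  have hm : (0:ℝ) ≤ (m : ℝ) := Nat.cast_nonneg m
  have hcoef : ((n + m + 4 : ℕ) : ℝ) * ((n + m + 3 : ℕ) : ℝ)
      ≤ (((m : ℝ) + 4) * ((m : ℝ) + 3)) * ((n : ℝ) + 2) ^ 3 := by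
    push_cast
    nlinarith [mul_nonneg hn hm, mul_nonneg hn hn, mul_nonneg (mul_nonneg hn hn) hn,
      mul_nonneg (mul_nonneg hn hn) hm, mul_nonneg (mul_nonneg hn hm) hm,
      mul_nonneg (mul_nonneg (mul_nonneg hn hn) hn) hm]
  rw [habs]
  calc ((n + m + 4 : ℕ) : ℝ) * ((n + m + 3 : ℕ) : ℝ) * l ^ (n + m + 2)
      ≤ ((n + m + 4 : ℕ) : ℝ) * ((n + m + 3 : ℕ) : ℝ) * (1/2)^n := by
        exact mul_le_mul_of_nonneg_left hpow (by positivity)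
    _ ≤ ((((m : ℝ) + 4) * ((m : ℝ) + 3)) * ((n : ℝ) + 2) ^ 3) * (1/2)^n :=
        mul_le_mul_of_nonneg_right hcoef (by positivity)
    _ = (((m : ℝ) + 4) * ((m : ℝ) + 3)) * (((n : ℝ) + 2) ^ 3 * (1/2)^n) := by ring

lemma tel1 (m : ℕ) {l : ℝ} (h0 : 0 ≤ l) (hl : l ≤ 1/2) :
    ∑' n : ℕ, ((↑(n + (m + 4)) : ℝ) * l ^ (n + (m + 4) - 1)
      - ((↑(n + (m + 4)) : ℝ) + 1) * l ^ (n + (m + 4)))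
      = ((m : ℝ) + 4) * l ^ (m + 3) := by
  set b : ℕ → ℝ := fun n => ((n + m + 4 : ℕ) : ℝ) * l ^ (n + m + 3) with hb
  have hfe : (fun n : ℕ => (↑(n + (m + 4)) : ℝ) * l ^ (n + (m + 4) - 1)
      - ((↑(n + (m + 4)) : ℝ) + 1) * l ^ (n + (m + 4))) = fun n => b n - b (n + 1) := by
    funext n
    have e1 : n + (m + 4) - 1 = n + m + 3 := by omega
    have e2 : n + (m + 4) = n + m + 4 := by omega
    have e3 : n + 1 + m + 4 = n + m + 5 := by omega
    have e4 : n + 1 + m + 3 = n + m + 4 := by omega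
    rw [hb]
    simp only [e1, e2, e3, e4]
    push_cast
    ring
  have hsb : Summable b := summable_b1 m h0 hl
  rw [hfe, tsum_telescope_aux hsb.tendsto_atTop_zero
    (hsb.sub ((summable_nat_add_iff 1).2 hsb))]
  rw [hb]
  push_cast
  norm_num

lemma tel2 (m : ℕ) {l : ℝ} (h0 : 0 ≤ l) (hl : l ≤ 1/2) :
    ∑' n : ℕ, ((↑(n + (m + 4)) : ℝ) * ((↑(n + (m + 4)) : ℝ) - 1) * l ^ (n + (m + 4) - 2)
      - ((↑(n + (m + 4)) : ℝ) + 1) * (↑(n + (m + 4)) : ℝ) * l ^ (n + (m + 4) - 1))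
      = ((m : ℝ) + 4) * ((m : ℝ) + 3) * l ^ (m + 2) := by
  set b : ℕ → ℝ := fun n => ((n + m + 4 : ℕ) : ℝ) * ((n + m + 3 : ℕ) : ℝ) * l ^ (n + m + 2)
    with hb
  have hfe : (fun n : ℕ => (↑(n + (m + 4)) : ℝ) * ((↑(n + (m + 4)) : ℝ) - 1) * l ^ (n + (m + 4) - 2)
      - ((↑(n + (m + 4)) : ℝ) + 1) * (↑(n + (m + 4)) : ℝ) * l ^ (n + (m + 4) - 1))
      = fun n => b n - b (n + 1) := by
    funext n
    have e1 : n + (m + 4) - 2 = n + m + 2 := by omega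
    have e1' : n + (m + 4) - 1 = n + m + 3 := by omega
    have e2 : n + (m + 4) = n + m + 4 := by omega
    have e3 : n + 1 + m + 4 = n + m + 5 := by omega
    have e4 : n + 1 + m + 3 = n + m + 4 := by omega
    have e5 : n + 1 + m + 2 = n + m + 3 := by omega
    rw [hb]
    simp only [e1, e1', e2, e3, e4, e5]
    push_cast
    ring
  have hsb : Summable b := summable_b2 m h0 hl
  rw [hfe, tsum_telescope_aux hsb.tendsto_atTop_zero
    (hsb.sub ((summable_nat_add_iff 1).2 hsb))]
  rw [hb]
  push_cast
  norm_num

end tel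

section est
variable {i : ℕ → ℝ} {m : ℕ} {l : ℝ}

lemma F1_est (hbd : ∀ n, |i n| ≤ 1) (h0 : i 0 = 0) (h1 : i 1 = 1) (h2 : i 2 = -1)
    (hm : ∀ j, j < m → i (j + 3) = 0) (hk : i (m + 3) = -1)
    (hl0 : 0 ≤ l) (hl : l ≤ 1/2) :
    |F1 i l - ((1 - 2*l) - (2*l - 3*l^2)
      - (((m:ℝ) + 3) * l^(m+2) - ((m:ℝ) + 4) * l^(m+3)))| ≤ ((m:ℝ) + 4) * l^(m+3) := by
  have hlabs : |l| ≤ 1/2 := by rw [abs_of_nonneg hl0]; exact hl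
  set w : ℕ → ℝ := fun n => (n : ℝ) * l ^ (n - 1) - ((n : ℝ) + 1) * l ^ n with hw
  have hsumw : Summable fun n => i n * w n :=
    summable_of_cube_bound (C := 3) fun n => by
      simpa [hw, mul_comm] using bound1 hbd hlabs n
  have hwpos : ∀ n, 0 ≤ w (n + (m + 4)) := by
    intro n
    rw [hw]
    simp only []
    have e1 : n + (m + 4) - 1 = n + m + 3 := by omega
    have e2 : n + (m + 4) = n + m + 4 := by omega
    rw [e1, e2]
    have hp : (0:ℝ) ≤ l ^ (n + m + 3) := by positivity
    have hps : l ^ (n + m + 4) = l ^ (n + m + 3) * l := by rw [← pow_succ]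
    rw [hps]
    push_cast
    have h1 : ((n:ℝ) + (m:ℝ) + 4 + 1) * (l ^ (n+m+3) * l)
        ≤ ((n:ℝ) + (m:ℝ) + 4 + 1) * (l ^ (n+m+3) * (1/2)) := by
      refine mul_le_mul_of_nonneg_left (mul_le_mul_of_nonneg_left hl hp) (by positivity)
    nlinarith [h1, mul_nonneg hp (show (0:ℝ) ≤ (n:ℝ) + (m:ℝ) + 3 by positivity)]
  have hWs : Summable fun n => w (n + (m + 4)) := by
    have hfe : (fun n : ℕ => w (n + (m + 4)))
        = fun n => ((n + m + 4 : ℕ) : ℝ) * l ^ (n + m + 3)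
          - ((n + m + 5 : ℕ) : ℝ) * l ^ (n + m + 4) := by
      funext n
      rw [hw]
      simp only []
      have e1 : n + (m + 4) - 1 = n + m + 3 := by omega
      have e2 : n + (m + 4) = n + m + 4 := by omega
      rw [e1, e2]
      push_cast
      ring
    rw [hfe]
    refine (summable_b1 m hl0 hl).sub ?_
    have := (summable_nat_add_iff (f := fun n : ℕ => ((n + m + 4 : ℕ) : ℝ) * l ^ (n + m + 3)) 1).2
      (summable_b1 m hl0 hl)
    refine this.congr fun n => ?_
    congr 2 <;> omega
  have hW : ∑' n, w (n + (m + 4)) = ((m:ℝ) + 4) * l ^ (m + 3) := by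
    have := tel1 m hl0 hl
    rw [← this]
    try exact tsum_congr fun n => by rw [hw]
  have key := tsum_split_aux i m hbd h0 hm w hsumw hwpos hWs
  rw [hW] at key
  have hw1 : w 1 = 1 - 2*l := by rw [hw]; norm_num
  have hw2 : w 2 = 2*l - 3*l^2 := by rw [hw]; norm_num; try ring
  have hv1 : i 1 * w 1 = 1 - 2*l := by rw [h1, hw1]; ring
  have hv2 : i 2 * w 2 = -(2*l - 3*l^2) := by rw [h2, hw2]; ring
  have hv3 : i (m + 3) * w (m + 3)
      = -(((m:ℝ) + 3) * l^(m+2) - ((m:ℝ) + 4) * l^(m+3)) := by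
    rw [hw, hk]
    simp only []
    have e1 : m + 3 - 1 = m + 2 := by omega
    rw [e1]
    push_cast
    try ring
  have hF : F1 i l = ∑' n, i n * w n := by
    rw [F1]
    try exact tsum_congr fun n => by rw [hw]
  rw [hv1, hv2, hv3] at key
  rw [hF]
  convert key using 2
  try ring

lemma F2_est (hbd : ∀ n, |i n| ≤ 1) (h0 : i 0 = 0) (h1 : i 1 = 1) (h2 : i 2 = -1)
    (hm : ∀ j, j < m → i (j + 3) = 0) (hk : i (m + 3) = -1)
    (hl0 : 0 ≤ l) (hl : l ≤ 1/2) :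
    |F2 i l - ((-2) - (2 - 6*l)
      - (((m:ℝ) + 3) * ((m:ℝ) + 2) * l^(m+1) - ((m:ℝ) + 4) * ((m:ℝ) + 3) * l^(m+2)))|
      ≤ ((m:ℝ) + 4) * ((m:ℝ) + 3) * l^(m+2) := by
  have hlabs : |l| ≤ 1/2 := by rw [abs_of_nonneg hl0]; exact hl
  set w : ℕ → ℝ := fun n => (n : ℝ) * ((n : ℝ) - 1) * l ^ (n - 2)
    - ((n : ℝ) + 1) * (n : ℝ) * l ^ (n - 1) with hw
  have hsumw : Summable fun n => i n * w n :=
    summable_of_cube_bound (C := 6) fun n => by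
      simpa [hw, mul_comm] using bound2 hbd hlabs n
  have hwpos : ∀ n, 0 ≤ w (n + (m + 4)) := by
    intro n
    rw [hw]
    simp only []
    have e1 : n + (m + 4) - 2 = n + m + 2 := by omega
    have e2 : n + (m + 4) - 1 = n + m + 3 := by omega
    rw [e1, e2]
    have hp : (0:ℝ) ≤ l ^ (n + m + 2) := by positivity
    have hps : l ^ (n + m + 3) = l ^ (n + m + 2) * l := by rw [← pow_succ]
    rw [hps]
    push_cast
    have h1 : (((n:ℝ) + (m:ℝ) + 4 + 1) * ((n:ℝ) + (m:ℝ) + 4)) * (l ^ (n+m+2) * l)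
        ≤ (((n:ℝ) + (m:ℝ) + 4 + 1) * ((n:ℝ) + (m:ℝ) + 4)) * (l ^ (n+m+2) * (1/2)) := by
      refine mul_le_mul_of_nonneg_left (mul_le_mul_of_nonneg_left hl hp) (by positivity)
    nlinarith [h1, mul_nonneg hp (show (0:ℝ) ≤ ((n:ℝ) + (m:ℝ) + 4) * ((n:ℝ) + (m:ℝ) + 1)
      by positivity)]
  have hWs : Summable fun n => w (n + (m + 4)) := by
    have hfe : (fun n : ℕ => w (n + (m + 4)))
        = fun n => ((n + m + 4 : ℕ) : ℝ) * ((n + m + 3 : ℕ) : ℝ) * l ^ (n + m + 2)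
          - ((n + m + 5 : ℕ) : ℝ) * ((n + m + 4 : ℕ) : ℝ) * l ^ (n + m + 3) := by
      funext n
      rw [hw]
      simp only []
      have e1 : n + (m + 4) - 2 = n + m + 2 := by omega
      have e2 : n + (m + 4) - 1 = n + m + 3 := by omega
      rw [e1, e2]
      push_cast
      ring
    rw [hfe]
    refine (summable_b2 m hl0 hl).sub ?_
    have := (summable_nat_add_iff
      (f := fun n : ℕ => ((n + m + 4 : ℕ) : ℝ) * ((n + m + 3 : ℕ) : ℝ) * l ^ (n + m + 2)) 1).2
      (summable_b2 m hl0 hl)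
    refine this.congr fun n => ?_
    rw [show n + 1 + m + 4 = n + m + 5 from by omega, show n + 1 + m + 3 = n + m + 4 from by omega,
      show n + 1 + m + 2 = n + m + 3 from by omega]
  have hW : ∑' n, w (n + (m + 4)) = ((m:ℝ) + 4) * ((m:ℝ) + 3) * l ^ (m + 2) := by
    have := tel2 m hl0 hl
    rw [← this]
    try exact tsum_congr fun n => by rw [hw]
  have key := tsum_split_aux i m hbd h0 hm w hsumw hwpos hWs
  rw [hW] at key
  have hw1 : w 1 = -2 := by rw [hw]; norm_num
  have hw2 : w 2 = 2 - 6*l := by rw [hw]; norm_num; try ring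
  have hv1 : i 1 * w 1 = -2 := by rw [h1, hw1]; ring
  have hv2 : i 2 * w 2 = -(2 - 6*l) := by rw [h2, hw2]; ring
  have hv3 : i (m + 3) * w (m + 3)
      = -(((m:ℝ) + 3) * ((m:ℝ) + 2) * l^(m+1) - ((m:ℝ) + 4) * ((m:ℝ) + 3) * l^(m+2)) := by
    rw [hw, hk]
    simp only []
    have e1 : m + 3 - 2 = m + 1 := by omega
    have e2 : m + 3 - 1 = m + 2 := by omega
    rw [e1, e2]
    push_cast
    try ring
  have hF : F2 i l = ∑' n, i n * w n := by
    rw [F2]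
    try exact tsum_congr fun n => by rw [hw]
  rw [hv1, hv2, hv3] at key
  rw [hF]
  convert key using 2
  try ring

end est

section numeric

lemma pow_bound3 (m : ℕ) {l : ℝ} (h0 : 0 ≤ l) (hl : l ≤ 1/3) :
    ((m:ℝ) + 3) * l ^ m ≤ 3 := by
  induction m with
  | zero => norm_num
  | succ k ih =>
    push_cast
    have hp : (0:ℝ) ≤ l ^ k := by positivity
    have h1 : ((k:ℝ) + 1 + 3) * l ^ (k + 1) ≤ ((k:ℝ) + 3) * l ^ k := by
      rw [pow_succ]
      have : ((k:ℝ) + 1 + 3) * l ≤ (k:ℝ) + 3 := by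
        nlinarith [Nat.cast_nonneg (α := ℝ) k]
      nlinarith [mul_le_mul_of_nonneg_right this hp]
    calc ((k:ℝ) + 1 + 3) * l ^ (k + 1) ≤ ((k:ℝ) + 3) * l ^ k := h1
      _ ≤ 3 := ih
  
lemma num_concave (m : ℕ) {l : ℝ} (h0 : 0 < l) (hl : l ≤ 1/3) :
    -4 + 6*l - ((m:ℝ) + 3)*((m:ℝ) + 2)*l^(m+1) + 2*((m:ℝ) + 4)*((m:ℝ) + 3)*l^(m+2) < 0 := by
  match m with
  | 0 =>
    norm_num
    nlinarith [mul_pos h0 h0]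
  | 1 =>
    norm_num
    have e2 : l^2 ≤ (1/3) * l := by nlinarith
    have e3 : l^3 ≤ (1/3) * l^2 := by nlinarith [mul_pos h0 h0]
    nlinarith
  | (j+2) =>
    have hp : (0:ℝ) ≤ l ^ (j + 3) := by positivity
    have hj : (0:ℝ) ≤ (j:ℝ) := Nat.cast_nonneg j
    have hstep : l ^ (j + 4) = l ^ (j + 3) * l := by rw [← pow_succ]
    have hco : 2*((j:ℝ)+2+4) * l ≤ (j:ℝ)+2+2 := by nlinarith
    have key : 2*((j:ℝ)+2+4)*((j:ℝ)+2+3) * l^(j+4) ≤ ((j:ℝ)+2+3)*((j:ℝ)+2+2) * l^(j+3) := by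
      rw [hstep]
      nlinarith [mul_le_mul_of_nonneg_right hco hp, mul_nonneg hp hj]
    push_cast
    have e1 : (j:ℝ) + 2 + 1 + 2 = (j:ℝ) + 2 + 3 + 2 - 2 := by ring
    have hexp1 : j + 2 + 1 = j + 3 := by omega
    have hexp2 : j + 2 + 2 = j + 4 := by omega
    rw [hexp1, hexp2]
    nlinarith [key]

end numeric

end AuxStmt6

open Set Filter Finset Topology in

theorem stmt6 (i : ℕ → ℝ) (hi : IsCoding i)
    (h0 : i 0 = 0) (h1 : i 1 = 1) (h2 : i 2 = -1)
    (htail : LexLt (fun n => i (n + 3)) (fun _ => 0)) :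
    StrictConcaveOn ℝ (Set.Ioc (0 : ℝ) (1/3)) (fun l => PiFun i l) ∧
    StrictMonoOn (fun l => PiFun i l) (Set.Ioc (0 : ℝ) (1/4)) ∧
    (∃! ls : ℝ, ls ∈ Set.Ico (1/4 : ℝ) (1/3) ∧
      StrictMonoOn (fun l => PiFun i l) (Set.Ioc (0 : ℝ) ls) ∧
      StrictAntiOn (fun l => PiFun i l) (Set.Icc ls (1/3))) := by
  -- basic structure extraction
  have hbd : ∀ n, |i n| ≤ 1 := by
    intro n
    rcases hi n with h | h | h <;> rw [h] <;> norm_num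
  obtain ⟨m, hmpre, hmneg⟩ := htail
  have hm : ∀ j, j < m → i (j + 3) = 0 := fun j hj => hmpre j hj
  have hk : i (m + 3) = -1 := by
    have hlt : i (m + 3) < 0 := hmneg
    rcases hi (m + 3) with h | h | h
    · exact h
    · rw [h] at hlt; linarith
    · rw [h] at hlt; linarith
  -- derivative facts
  set s : Set ℝ := Ioo (-(1/2) : ℝ) (1/2) with hs
  have hP1 : ∀ x ∈ s, HasDerivAt (PiFun i) (F1 i x) x := fun x hx => hasDerivAt_PiFun hbd hx
  have hF12 : ∀ x ∈ s, HasDerivAt (F1 i) (F2 i x) x := fun x hx => hasDerivAt_F1 hbd hx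
  have hsub : Ioc (0:ℝ) (1/3) ⊆ s := by
    intro x hx
    constructor
    · linarith [hx.1]
    · linarith [hx.2]
  have hderivP : ∀ x ∈ s, deriv (PiFun i) x = F1 i x := fun x hx => (hP1 x hx).deriv
  have hderivF1 : ∀ x ∈ s, deriv (F1 i) x = F2 i x := fun x hx => (hF12 x hx).deriv
  have hderiv2 : ∀ x ∈ s, deriv (deriv (PiFun i)) x = F2 i x := by
    intro x hx
    have hev : deriv (PiFun i) =ᶠ[nhds x] F1 i :=
      Filter.eventuallyEq_of_mem (isOpen_Ioo.mem_nhds hx) (fun y hy => (hP1 y hy).deriv)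
    rw [hev.deriv_eq, hderivF1 x hx]
  have contP : ∀ t : Set ℝ, t ⊆ s → ContinuousOn (PiFun i) t :=
    fun t ht x hx => ((hP1 x (ht hx)).continuousAt).continuousWithinAt
  have contF1 : ∀ t : Set ℝ, t ⊆ s → ContinuousOn (F1 i) t :=
    fun t ht x hx => ((hF12 x (ht hx)).continuousAt).continuousWithinAt
  -- F2 negative on (0, 1/3]
  have hF2neg : ∀ l ∈ Ioc (0:ℝ) (1/3), F2 i l < 0 := by
    intro l hl
    have h0l : (0:ℝ) ≤ l := le_of_lt hl.1
    have h12 : l ≤ 1/2 := by linarith [hl.2]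
    have hest := abs_le.mp (F2_est hbd h0 h1 h2 hm hk h0l h12)
    have hnum := num_concave m hl.1 hl.2
    linarith [hest.2]
  -- F1 lower/upper bounds
  have hF1lb : ∀ l : ℝ, 0 ≤ l → l ≤ 1/2 →
      1 - 4*l + 3*l^2 - ((m:ℝ) + 3) * l^(m+2) ≤ F1 i l := by
    intro l h0l h12
    have hest := abs_le.mp (F1_est hbd h0 h1 h2 hm hk h0l h12)
    linarith [hest.1]
  have hF1ub : ∀ l : ℝ, 0 ≤ l → l ≤ 1/2 →
      F1 i l ≤ 1 - 4*l + 3*l^2 - ((m:ℝ) + 3) * l^(m+2) + 2*((m:ℝ) + 4) * l^(m+3) := by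
    intro l h0l h12
    have hest := abs_le.mp (F1_est hbd h0 h1 h2 hm hk h0l h12)
    linarith [hest.2]
  have hcube : ∀ l : ℝ, 0 ≤ l → l ≤ 1/3 → ((m:ℝ) + 3) * l^(m+2) ≤ 3 * l^2 := by
    intro l h0l h13
    have hb := pow_bound3 m h0l h13
    have : l^(m+2) = l^m * l^2 := by rw [← pow_add]
    rw [this, ← mul_assoc]
    exact mul_le_mul_of_nonneg_right hb (sq_nonneg l)
  -- F1 positive below 1/4, nonneg at 1/4, negative at 1/3
  have hposlt14 : ∀ l : ℝ, 0 < l → l < 1/4 → 0 < F1 i l := by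
    intro l h0l h14
    have := hF1lb l (le_of_lt h0l) (by linarith)
    have := hcube l (le_of_lt h0l) (by linarith)
    nlinarith [sq_nonneg l]
  have hF1quarter : 0 ≤ F1 i (1/4 : ℝ) := by
    have hl := hF1lb (1/4) (by norm_num) (by norm_num)
    have hc := hcube (1/4) (by norm_num) (by norm_num)
    nlinarith
  have hF1third : F1 i (1/3 : ℝ) < 0 := by
    have hu := hF1ub (1/3) (by norm_num) (by norm_num)
    have hp : (0:ℝ) < (1/3 : ℝ)^(m+2) := by positivity
    have hstep : ((1:ℝ)/3)^(m+3) = (1/3)^(m+2) * (1/3) := by rw [← pow_succ]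
    have hcoef : 2*((m:ℝ) + 4)*(1/3) < (m:ℝ) + 3 := by
      nlinarith [Nat.cast_nonneg (α := ℝ) m]
    have : 2*((m:ℝ) + 4) * (1/3)^(m+3) < ((m:ℝ) + 3) * (1/3)^(m+2) := by
      rw [hstep]
      nlinarith [mul_lt_mul_of_pos_right hcoef hp]
    nlinarith
  -- F1 strictly decreasing on (0, 1/3]
  have hF1anti : StrictAntiOn (F1 i) (Ioc (0:ℝ) (1/3)) := by
    refine strictAntiOn_of_deriv_neg (convex_Ioc _ _) (contF1 _ hsub) ?_
    intro x hx
    rw [interior_Ioc] at hx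
    have hx' : x ∈ Ioc (0:ℝ) (1/3) := ⟨hx.1, le_of_lt hx.2⟩
    rw [hderivF1 x (hsub hx')]
    exact hF2neg x hx'
  -- the critical point
  have hIccsub : Icc (1/4 : ℝ) (1/3) ⊆ Ioc (0:ℝ) (1/3) := by
    intro x hx
    exact ⟨by linarith [hx.1], hx.2⟩
  have hiv := intermediate_value_Icc' (by norm_num : (1/4:ℝ) ≤ 1/3)
    ((contF1 _ hsub).mono hIccsub)
  obtain ⟨ls, hlsmem, hlsval⟩ := hiv ⟨le_of_lt hF1third, hF1quarter⟩
  have hls0 : 0 < ls := by linarith [hlsmem.1]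
  have hlslt : ls < 1/3 := by
    rcases lt_or_eq_of_le hlsmem.2 with h | h
    · exact h
    · exfalso; rw [h] at hlsval; rw [hlsval] at hF1third; linarith
  have hlsIoc : ls ∈ Ioc (0:ℝ) (1/3) := ⟨hls0, hlsmem.2⟩
  -- F1 signs around ls
  have hF1pos : ∀ x ∈ Ioo (0:ℝ) ls, 0 < F1 i x := by
    intro x hx
    rcases lt_or_ge x (1/4) with h | h
    · exact hposlt14 x hx.1 h
    · have hxIoc : x ∈ Ioc (0:ℝ) (1/3) := ⟨hx.1, by linarith [hx.2]⟩
      have := hF1anti hxIoc hlsIoc hx.2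
      rw [hlsval] at this
      linarith
  have hF1negIoo : ∀ x ∈ Ioo ls (1/3 : ℝ), F1 i x < 0 := by
    intro x hx
    have hxIoc : x ∈ Ioc (0:ℝ) (1/3) := ⟨by linarith [hx.1], le_of_lt hx.2⟩
    have := hF1anti hlsIoc hxIoc hx.1
    rw [hlsval] at this
    linarith
  -- assemble
  have hsub14 : Ioc (0:ℝ) (1/4) ⊆ s := by
    intro x hx; exact ⟨by linarith [hx.1], by linarith [hx.2]⟩
  have hsubls : Ioc (0:ℝ) ls ⊆ s := by
    intro x hx; exact ⟨by linarith [hx.1], by linarith [hx.2]⟩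
  have hsubIcc : Icc ls (1/3 : ℝ) ⊆ s := by
    intro x hx; exact ⟨by linarith [hx.1], by linarith [hx.2]⟩
  have monoMain : StrictMonoOn (fun l => PiFun i l) (Ioc (0:ℝ) ls) := by
    refine strictMonoOn_of_deriv_pos (convex_Ioc _ _) (contP _ hsubls) ?_
    intro x hx
    rw [interior_Ioc] at hx
    have hmem : x ∈ s := hsubls ⟨hx.1, le_of_lt hx.2⟩
    have : deriv (fun l => PiFun i l) x = F1 i x := hderivP x hmem
    rw [this]
    exact hF1pos x hx
  have antiMain : StrictAntiOn (fun l => PiFun i l) (Icc ls (1/3 : ℝ)) := by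
    refine strictAntiOn_of_deriv_neg (convex_Icc _ _) (contP _ hsubIcc) ?_
    intro x hx
    rw [interior_Icc] at hx
    have hmem : x ∈ s := hsubIcc ⟨le_of_lt hx.1, le_of_lt hx.2⟩
    have : deriv (fun l => PiFun i l) x = F1 i x := hderivP x hmem
    rw [this]
    exact hF1negIoo x hx
  refine ⟨?_, ?_, ls, ⟨⟨hlsmem.1, hlslt⟩, monoMain, antiMain⟩, ?_⟩
  · -- strict concavity
    refine strictConcaveOn_of_deriv2_neg (convex_Ioc _ _) (contP _ hsub) ?_
    intro x hx
    rw [interior_Ioc] at hx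
    have hx' : x ∈ Ioc (0:ℝ) (1/3) := ⟨hx.1, le_of_lt hx.2⟩
    have he : deriv^[2] (fun l => PiFun i l) x = deriv (deriv (PiFun i)) x := by
      simp [Function.iterate_succ, Function.iterate_zero, Function.comp]
    rw [he, hderiv2 x (hsub hx')]
    exact hF2neg x hx'
  · -- strict mono on (0, 1/4]
    refine strictMonoOn_of_deriv_pos (convex_Ioc _ _) (contP _ hsub14) ?_
    intro x hx
    rw [interior_Ioc] at hx
    have hmem : x ∈ s := hsub14 ⟨hx.1, le_of_lt hx.2⟩
    have : deriv (fun l => PiFun i l) x = F1 i x := hderivP x hmem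
    rw [this]
    exact hposlt14 x hx.1 hx.2
  · -- uniqueness
    rintro y ⟨hyIco, hymono, hyanti⟩
    by_contra hne
    rcases lt_or_gt_of_ne hne with hlt | hgt
    · -- y < ls
      have h1 : PiFun i y < PiFun i ls :=
        monoMain ⟨by linarith [hyIco.1], le_of_lt hlt⟩ ⟨hls0, le_refl ls⟩ hlt
      have h2 : PiFun i ls < PiFun i y :=
        hyanti ⟨le_refl y, by linarith [hyIco.2]⟩ ⟨le_of_lt hlt, hlsmem.2⟩ hlt
      linarith
    · -- ls < y
      have h1 : PiFun i ls < PiFun i y :=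
        hymono ⟨hls0, le_of_lt hgt⟩ ⟨by linarith [hyIco.1], le_refl y⟩ hgt
      have h2 : PiFun i y < PiFun i ls :=
        antiMain ⟨le_refl ls, le_of_lt hlslt⟩ ⟨le_of_lt hgt, le_of_lt hyIco.2⟩ hgt
      linarith
end

section
/- Let t ∈ (1/3, 1). Then for every λ ∈ Λ(t) = {λ ∈ (0,1/3] : t ∈ C_λ − C_λ}, the unique coding (i_n) ∈ {-1,0,1}^ℕ of t in base λ (i.e., (1-λ)·∑ i_n λ^{n-1} = t) satisfies 1(-1)^∞ ≼ (i_n) ≼ 1^∞, i.e., i_1 = 1; and if λ₁ < λ₂ are two elements of Λ(t) ∩ (0,1/3) with codings (i_n), (j_n) respectively, then (i_n) ≺ (j_n) lexicographically (the coding map is strictly increasing). -/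
open scoped Pointwise

lemma summable_aux {f : ℕ → ℝ} {C l : ℝ} (hf : ∀ n, |f n| ≤ C)
    (h0 : 0 ≤ l) (h1 : l < 1) : Summable (fun n => f n * l ^ n) := by
  apply Summable.of_norm_bounded (g := fun n => C * l ^ n)
    ((summable_geometric_of_lt_one h0 h1).mul_left C)
  intro n
  rw [Real.norm_eq_abs, abs_mul, abs_pow, abs_of_nonneg h0]
  exact mul_le_mul_of_nonneg_right (hf n) (pow_nonneg h0 n)

lemma tsum_bound_aux {f : ℕ → ℝ} {C l : ℝ} (hf : ∀ n, |f n| ≤ C)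
    (h0 : 0 ≤ l) (h1 : l < 1) : |∑' n, f n * l ^ n| ≤ C * (1 - l)⁻¹ := by
  have hgeo := summable_geometric_of_lt_one h0 h1
  have hsn : Summable (fun n => |f n * l ^ n|) := (summable_aux hf h0 h1).abs
  calc |∑' n, f n * l ^ n| ≤ ∑' n, |f n * l ^ n| := by
        have := norm_tsum_le_tsum_norm (f := fun n => f n * l ^ n)
          (by simpa only [Real.norm_eq_abs] using hsn)
        simpa only [Real.norm_eq_abs] using this
    _ ≤ ∑' n, C * l ^ n := by
        apply Summable.tsum_le_tsum _ hsn (hgeo.mul_left C)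
        intro n
        rw [abs_mul, abs_pow, abs_of_nonneg h0]
        exact mul_le_mul_of_nonneg_right (hf n) (pow_nonneg h0 n)
    _ = C * (1 - l)⁻¹ := by rw [tsum_mul_left, tsum_geometric_of_lt_one h0 h1]

lemma coding_abs {i : ℕ → ℝ} (hi : IsCoding i) (n : ℕ) : |i n| ≤ 1 := by
  rcases hi n with h | h | h <;> rw [h] <;> norm_num

/-- Part 1 core: if the coding of `t` has first digit ≤ 0 then `t ≤ 1/3`. -/
lemma first_digit {t l : ℝ} (hl0 : 0 < l) (hl3 : l ≤ 1/3) {i : ℕ → ℝ}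
    (hi : IsCoding i) (hpi : PiFun i l = t) (ht : 1/3 < t) : i 0 = 1 := by
  have hl1 : l < 1 := by linarith
  by_contra h0
  have hi0 : i 0 ≤ 0 := by
    rcases hi 0 with h | h | h
    · simp [h]
    · simp [h]
    · exact absurd h h0
  have hsum : Summable (fun n => i n * l ^ n) := summable_aux (coding_abs hi) hl0.le hl1
  have hsum' : Summable (fun n => i (n + 1) * l ^ n) :=
    summable_aux (fun n => coding_abs hi (n + 1)) hl0.le hl1
  have hshift : ∑' n, i (n + 1) * l ^ (n + 1) = l * ∑' n, i (n + 1) * l ^ n := by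
    rw [← tsum_mul_left]; exact tsum_congr fun n => by ring
  have hdec : ∑' n, i n * l ^ n = i 0 + l * ∑' n, i (n + 1) * l ^ n := by
    rw [Summable.tsum_eq_zero_add hsum, hshift, pow_zero, mul_one]
  have hT : |∑' n, i (n + 1) * l ^ n| ≤ 1 * (1 - l)⁻¹ :=
    tsum_bound_aux (fun n => coding_abs hi (n + 1)) hl0.le hl1
  have hT' : ∑' n, i (n + 1) * l ^ n ≤ (1 - l)⁻¹ := by
    have := (abs_le.mp hT).2; linarith
  have hinv : (1 - l) * (1 - l)⁻¹ = 1 := mul_inv_cancel₀ (by linarith)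
  have hle : PiFun i l ≤ l := by
    rw [PiFun, hdec]
    nlinarith [hT', hi0, mul_pos hl0 (show (0:ℝ) < 1 - l by linarith)]
  linarith [hpi ▸ hle]

/-- Tail positivity: if `f` vanishes before `m`, `f m ≥ 1`, `|f| ≤ 2`, `0 < l < 1/3`,
then the power series is positive. -/
lemma tail_pos {f : ℕ → ℝ} {l : ℝ} (m : ℕ) (hb : ∀ n, |f n| ≤ 2)
    (hz : ∀ n < m, f n = 0) (hm : 1 ≤ f m) (h0 : 0 < l) (h13 : l < 1/3) :
    0 < ∑' n, f n * l ^ n := by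
  have hl1 : l < 1 := by linarith
  have hsum : Summable (fun n => f n * l ^ n) := summable_aux hb h0.le hl1
  have hsplit := Summable.sum_add_tsum_nat_add m hsum
  have hz' : ∑ n ∈ Finset.range m, f n * l ^ n = 0 :=
    Finset.sum_eq_zero fun n hn => by rw [hz n (Finset.mem_range.mp hn), zero_mul]
  have hsumT : Summable (fun n => f (n + m) * l ^ n) :=
    summable_aux (fun n => hb (n + m)) h0.le hl1
  have hfac : ∑' n, f (n + m) * l ^ (n + m) = l ^ m * ∑' n, f (n + m) * l ^ n := by
    rw [← tsum_mul_left]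
    exact tsum_congr fun n => by rw [pow_add]; ring
  have hshift : ∑' n, f (n + 1 + m) * l ^ (n + 1) = l * ∑' n, f (n + 1 + m) * l ^ n := by
    rw [← tsum_mul_left]; exact tsum_congr fun n => by ring
  have hdec : ∑' n, f (n + m) * l ^ n = f m + l * ∑' n, f (n + 1 + m) * l ^ n := by
    rw [Summable.tsum_eq_zero_add hsumT, hshift, pow_zero, mul_one, zero_add]
  have hU : |∑' n, f (n + 1 + m) * l ^ n| ≤ 2 * (1 - l)⁻¹ :=
    tsum_bound_aux (fun n => hb (n + 1 + m)) h0.le hl1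
  have hU' : -(2 * (1 - l)⁻¹) ≤ ∑' n, f (n + 1 + m) * l ^ n := (abs_le.mp hU).1
  have hinv : (1 - l) * (1 - l)⁻¹ = 1 := mul_inv_cancel₀ (by linarith)
  have hTpos : 0 < ∑' n, f (n + m) * l ^ n := by
    rw [hdec]
    nlinarith [hU', mul_pos h0 (show (0:ℝ) < 1 - l by linarith)]
  have : ∑' n, f n * l ^ n = l ^ m * ∑' n, f (n + m) * l ^ n := by
    rw [← hsplit, hz', zero_add, hfac]
  rw [this]
  exact mul_pos (pow_pos h0 m) hTpos

lemma key_ineq {u v : ℝ} (hu : 0 < u) (huv : u < v) (hv : u + v < 1) (m : ℕ) :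
    u ^ (m + 1) * (1 - u) < v ^ (m + 1) * (1 - v) := by
  have hv0 : 0 < v := hu.trans huv
  have hP : (0:ℝ) < v ^ m := pow_pos hv0 m
  have h1 : u ^ (m + 1) ≤ v ^ m * u := by
    rw [pow_succ]
    exact mul_le_mul_of_nonneg_right (pow_le_pow_left₀ hu.le huv.le m) hu.le
  have h2 : v ^ m * u < v ^ m * (1 - v) :=
    mul_lt_mul_of_pos_left (by linarith) hP
  have hA : u ^ (m + 1) < v ^ m * (1 - v) := lt_of_le_of_lt h1 h2
  have hB : v ^ (m + 1) = v ^ m * v := pow_succ v m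
  have hBA : v ^ m * (v - u) ≤ v ^ (m + 1) - u ^ (m + 1) := by nlinarith [h1]
  nlinarith [mul_lt_mul_of_pos_right hA (show (0:ℝ) < v - u by linarith),
    mul_le_mul_of_nonneg_left hBA (show (0:ℝ) ≤ 1 - v by linarith)]

lemma coding_one_sub {i : ℕ → ℝ} (hi : IsCoding i) (n : ℕ) :
    0 ≤ 1 - i n ∧ |1 - i n| ≤ 2 := by
  rcases hi n with h | h | h <;> rw [h] <;> norm_num

/-- Rewriting `PiFun` in "complement" form. -/
lemma piFun_eq {i : ℕ → ℝ} (hi : IsCoding i) {l : ℝ} (h0 : 0 ≤ l) (h1 : l < 1) :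
    PiFun i l = 1 - ∑' n, (1 - i n) * (l ^ n * (1 - l)) := by
  have hsum : Summable (fun n => i n * l ^ n) := summable_aux (coding_abs hi) h0 h1
  have hgeo := summable_geometric_of_lt_one h0 h1
  have he : (fun n => (1 - i n) * l ^ n) = fun n => l ^ n - i n * l ^ n := by
    funext n; ring
  have hsume : Summable (fun n => (1 - i n) * l ^ n) := by
    rw [he]; exact hgeo.sub hsum
  have h3 : ∑' n, (1 - i n) * l ^ n = (1 - l)⁻¹ - ∑' n, i n * l ^ n := by
    rw [he, Summable.tsum_sub hgeo hsum, tsum_geometric_of_lt_one h0 h1]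
  have h4 : ∑' n, (1 - i n) * (l ^ n * (1 - l)) = (1 - l) * ∑' n, (1 - i n) * l ^ n := by
    rw [← tsum_mul_left]
    exact tsum_congr fun n => by ring
  have hinv : (1 - l) * (1 - l)⁻¹ = 1 := mul_inv_cancel₀ (by linarith)
  rw [PiFun, h4, h3]
  ring_nf
  nlinarith [hinv]

/-- Strict monotonicity: `λ ↦ PiFun i λ` is strictly decreasing on `(0,1/3]`
when `i 0 = 1` and `i` is not the all-ones sequence. -/
lemma piFun_strict_anti {i : ℕ → ℝ} (hi : IsCoding i) (h0 : i 0 = 1) {k : ℕ} (hk : i k ≠ 1)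
    {l₁ l₂ : ℝ} (h1 : 0 < l₁) (h12 : l₁ < l₂) (h2 : l₂ ≤ 1/3) :
    PiFun i l₂ < PiFun i l₁ := by
  have hl1 : l₁ < 1 := by linarith
  have hl2 : l₂ < 1 := by linarith
  rw [piFun_eq hi h1.le hl1, piFun_eq hi (by linarith : (0:ℝ) ≤ l₂) hl2]
  have hsum : ∀ l : ℝ, 0 ≤ l → l < 1 → Summable (fun n => (1 - i n) * (l ^ n * (1 - l))) := by
    intro l hl0 hl1'
    have : (fun n => (1 - i n) * (l ^ n * (1 - l))) = fun n => ((1 - i n) * (1 - l)) * l ^ n := by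
      funext n; ring
    rw [this]
    refine summable_aux (C := 2) (fun n => ?_) hl0 hl1'
    rw [abs_mul]
    calc |1 - i n| * |1 - l| ≤ 2 * 1 := by
          apply mul_le_mul (coding_one_sub hi n).2 _ (abs_nonneg _) (by norm_num)
          rw [abs_of_nonneg (by linarith)]; linarith
      _ = 2 := by norm_num
  have hkey : ∑' n, (1 - i n) * (l₁ ^ n * (1 - l₁)) < ∑' n, (1 - i n) * (l₂ ^ n * (1 - l₂)) := by
    have hk0 : k ≠ 0 := fun h => hk (h ▸ h0)
    obtain ⟨m, rfl⟩ := Nat.exists_eq_succ_of_ne_zero hk0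
    apply Summable.tsum_lt_tsum (i := m + 1) _ _ (hsum l₁ h1.le hl1) (hsum l₂ (by linarith) hl2)
    · intro n
      dsimp only
      rcases Nat.eq_zero_or_pos n with rfl | hn
      · rw [h0]; norm_num
      · obtain ⟨p, rfl⟩ := Nat.exists_eq_succ_of_ne_zero hn.ne'
        apply mul_le_mul_of_nonneg_left _ (coding_one_sub hi _).1
        exact le_of_lt (key_ineq h1 h12 (by linarith) p)
    · have he1 : 1 ≤ 1 - i (m + 1) := by
        rcases hi (m + 1) with h | h | h <;> rw [h] <;> norm_num
        exact absurd h hk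
      have hkineq := key_ineq h1 h12 (by linarith : l₁ + l₂ < 1) m
      have hpos : 0 < l₂ ^ (m + 1) * (1 - l₂) - l₁ ^ (m + 1) * (1 - l₁) := by linarith
      nlinarith [hpos, he1, pow_pos h1 (m + 1),
        mul_pos (pow_pos h1 (m + 1)) (show (0:ℝ) < 1 - l₁ by linarith)]
  linarith

lemma piFun_all_one {i : ℕ → ℝ} (h : ∀ n, i n = 1) {l : ℝ} (h0 : 0 ≤ l) (h1 : l < 1) :
    PiFun i l = 1 := by
  have : (fun n => i n * l ^ n) = fun n => l ^ n := by funext n; rw [h n, one_mul]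
  rw [PiFun, this, tsum_geometric_of_lt_one h0 h1, mul_inv_cancel₀ (by linarith)]


theorem stmt19 (t : ℝ) (ht : t ∈ Set.Ioo (1/3 : ℝ) 1) :
    (∀ l ∈ Lam t, ∀ i : ℕ → ℝ, IsCoding i → PiFun i l = t → i 0 = 1) ∧
    (∀ l₁ l₂ : ℝ, l₁ ∈ Lam t ∩ Set.Ioo (0 : ℝ) (1/3) → l₂ ∈ Lam t ∩ Set.Ioo (0 : ℝ) (1/3) →
      ∀ i j : ℕ → ℝ, IsCoding i → IsCoding j → PiFun i l₁ = t → PiFun j l₂ = t →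
        l₁ < l₂ → LexLt i j) := by
  obtain ⟨ht1, ht2⟩ := ht
  constructor
  · intro l hl i hi hpi
    exact first_digit hl.1.1 hl.1.2 hi hpi ht1
  · intro l₁ l₂ h1 h2 i j hi hj hpi hpj hlt
    obtain ⟨⟨hl1Ioc, _⟩, hl1o⟩ := h1
    obtain ⟨⟨hl2Ioc, _⟩, hl2o⟩ := h2
    have hi0 : i 0 = 1 := first_digit hl1Ioc.1 hl1Ioc.2 hi hpi ht1
    have hl1pos : 0 < l₁ := hl1o.1
    have hl2pos : 0 < l₂ := hl2o.1
    have hl213 : l₂ < 1/3 := hl2o.2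
    have hl21 : l₂ < 1 := by linarith
    have hex : ∃ k, i k ≠ 1 := by
      by_contra hc
      push_neg at hc
      have h1' := piFun_all_one hc hl1pos.le (by linarith : l₁ < 1)
      rw [hpi] at h1'
      linarith
    obtain ⟨k, hk⟩ := hex
    by_contra hnot
    have hcase : i = j ∨ LexLt j i := by
      by_cases heq : i = j
      · exact Or.inl heq
      · right
        have hS : ∃ n, i n ≠ j n := by
          by_contra hS
          push_neg at hS
          exact heq (funext hS)
        classical
        refine ⟨Nat.find hS, fun n hn => ?_, ?_⟩
        · have hmin := Nat.find_min hS hn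
          push_neg at hmin
          exact hmin.symm
        · rcases lt_trichotomy (i (Nat.find hS)) (j (Nat.find hS)) with h | h | h
          · refine absurd ⟨Nat.find hS, fun n hn => ?_, h⟩ hnot
            have hmin := Nat.find_min hS hn
            push_neg at hmin
            exact hmin
          · exact absurd h (Nat.find_spec hS)
          · exact h
    rcases hcase with rfl | ⟨m, hpre, hjm⟩
    · have hanti := piFun_strict_anti hi hi0 hk hl1pos hlt hl213.le
      rw [hpi, hpj] at hanti
      exact lt_irrefl t hanti
    · have hd2 : ∀ n, |i n - j n| ≤ 2 := by
        intro n
        have ha := abs_le.mp (coding_abs hi n)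
        have hb := abs_le.mp (coding_abs hj n)
        rw [abs_le]
        constructor <;> linarith [ha.1, ha.2, hb.1, hb.2]
      have hdz : ∀ n < m, i n - j n = 0 := fun n hn => by rw [hpre n hn]; ring
      have hdm : 1 ≤ i m - j m := by
        rcases hi m with a | a | a <;> rcases hj m with b | b | b <;>
          rw [a, b] at hjm ⊢ <;> linarith
      have hpos := tail_pos m hd2 hdz hdm hl2pos hl213
      have hsi : Summable (fun n => i n * l₂ ^ n) := summable_aux (coding_abs hi) hl2pos.le hl21
      have hsj : Summable (fun n => j n * l₂ ^ n) := summable_aux (coding_abs hj) hl2pos.le hl21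
      have e : ∑' n, (i n - j n) * l₂ ^ n = ∑' n, i n * l₂ ^ n - ∑' n, j n * l₂ ^ n := by
        rw [← Summable.tsum_sub hsi hsj]
        exact tsum_congr fun n => by ring
      have ediff : PiFun i l₂ - PiFun j l₂ = (1 - l₂) * ∑' n, (i n - j n) * l₂ ^ n := by
        unfold PiFun
        rw [e]
        ring
      have hgt : t < PiFun i l₂ := by
        have hmp := mul_pos (show (0:ℝ) < 1 - l₂ by linarith) hpos
        rw [← hpj]
        linarith [ediff]
      have hanti := piFun_strict_anti hi hi0 hk hl1pos hlt hl213.le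
      rw [hpi] at hanti
      linarith
end
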